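/- Let g ∈ ℝ and let W̃ : ℝ → ℝ be any differentiable function. On the domain {(T₁,T₂,T₄,T₅) ∈ ℝ⁴ : T₅ < 0}, define ζ = (125·T₁T₅³ − 100·T₂T₄T₅² + 16·T₄⁴) · (−T₅)^{−16/5} and F(T₁,T₂,T₄,T₅) = −(g²/15)·log(−T₅) − (1/5)·T₁T₂²/T₅ + (4/75)·T₂³T₄/T₅² − (2/25)·T₄²T₁²/T₅² + (16/125)·T₄³T₁T₂/T₅³ − (32/625)·T₄⁴T₂²/T₅⁴ − (128/9375)·T₄⁶T₁/T₅⁵ + (512/46875)·T₄⁷T₂/T₅⁶ − (4096/5859375)·T₄¹⁰/T₅⁸ + W̃(ζ). Then F satisfies all three reduced constraints of the (3,2) Generalized Kontsevich Model: (4/3)·T₂³ + 2·T₁²T₄ + 10·T₂T₅·∂F/∂T₁ + 8·T₄²·∂F/∂T₂ + (25/2)·T₅²·∂F/∂T₄ = 0; 2·T₁T₂ + 4·T₄·∂F/∂T₁ + 5·T₅·∂F/∂T₂ = 0; and g²/3 + T₁·∂F/∂T₁ + 2·T₂·∂F/∂T₂ + 4·T₄·∂F/∂T₄ + 5·T₅·∂F/∂T₅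 = 0. -/

import Mathlib

set_option maxHeartbeats 4000000


open Real

/-- The scaling-invariant combination of the times of the (3,2) Generalized
Kontsevich Model:
`ζ = (125·T₁T₅³ − 100·T₂T₄T₅² + 16·T₄⁴)·(−T₅)^{−16/5}`. -/
noncomputable def zeta32 (T₁ T₂ T₄ T₅ : ℝ) : ℝ :=
  (125 * T₁ * T₅ ^ 3 - 100 * T₂ * T₄ * T₅ ^ 2 + 16 * T₄ ^ 4) * (-T₅) ^ (-(16 : ℝ) / 5)

/-- The general solution of the reduced constraints of the (3,2) Generalized
Kontsevich Model, with `W̃` an arbitrary function of one variable. -/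
noncomputable def gkm32F (g : ℝ) (Wt : ℝ → ℝ) (T₁ T₂ T₄ T₅ : ℝ) : ℝ :=
  -(g ^ 2 / 15) * Real.log (-T₅) - (1 / 5) * T₁ * T₂ ^ 2 / T₅ +
    (4 / 75) * T₂ ^ 3 * T₄ / T₅ ^ 2 - (2 / 25) * T₄ ^ 2 * T₁ ^ 2 / T₅ ^ 2 +
    (16 / 125) * T₄ ^ 3 * T₁ * T₂ / T₅ ^ 3 - (32 / 625) * T₄ ^ 4 * T₂ ^ 2 / T₅ ^ 4 -
    (128 / 9375) * T₄ ^ 6 * T₁ / T₅ ^ 5 + (512 / 46875) * T₄ ^ 7 * T₂ / T₅ ^ 6 -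
    (4096 / 5859375) * T₄ ^ 10 / T₅ ^ 8 + Wt (zeta32 T₁ T₂ T₄ T₅)

/-- For any differentiable `W̃ : ℝ → ℝ`, the function `gkm32F` satisfies all
three reduced constraints (`W⁽³⁾₋₂`, `L₋₁` and `L₀`) of the (3,2) Generalized
Kontsevich Model on the domain `T₅ < 0`. -/
theorem gkm32F_satisfies_reduced_constraints
    (g : ℝ) (Wt : ℝ → ℝ) (hWt : Differentiable ℝ Wt)
    (T₁ T₂ T₄ T₅ : ℝ) (hT₅ : T₅ < 0) :
    (4 / 3) * T₂ ^ 3 + 2 * T₁ ^ 2 * T₄ +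
        10 * T₂ * T₅ * deriv (fun t => gkm32F g Wt t T₂ T₄ T₅) T₁ +
        8 * T₄ ^ 2 * deriv (fun t => gkm32F g Wt T₁ t T₄ T₅) T₂ +
        (25 / 2) * T₅ ^ 2 * deriv (fun t => gkm32F g Wt T₁ T₂ t T₅) T₄ = 0 ∧
    2 * T₁ * T₂ + 4 * T₄ * deriv (fun t => gkm32F g Wt t T₂ T₄ T₅) T₁ +
        5 * T₅ * deriv (fun t => gkm32F g Wt T₁ t T₄ T₅) T₂ = 0 ∧
    g ^ 2 / 3 + T₁ * deriv (fun t => gkm32F g Wt t T₂ T₄ T₅) T₁ +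
        2 * T₂ * deriv (fun t => gkm32F g Wt T₁ t T₄ T₅) T₂ +
        4 * T₄ * deriv (fun t => gkm32F g Wt T₁ T₂ t T₅) T₄ +
        5 * T₅ * deriv (fun t => gkm32F g Wt T₁ T₂ T₄ t) T₅ = 0 := by
  have h5 : T₅ ≠ 0 := ne_of_lt hT₅
  have h5' : (0:ℝ) < -T₅ := by linarith
  have hne : -T₅ ≠ 0 := ne_of_gt h5'
  -- derivative in T₁
  have hz1 := (((((hasDerivAt_id T₁).const_mul (125:ℝ)).mul_const (T₅^3)).sub_const
      (100*T₂*T₄*T₅^2)).add_const (16*T₄^4)).mul_const ((-T₅) ^ (-(16:ℝ)/5))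
  have hw1 := (hWt (zeta32 T₁ T₂ T₄ T₅)).hasDerivAt.comp T₁ hz1
  have H1 : HasDerivAt (fun t => gkm32F g Wt t T₂ T₄ T₅) _ T₁ :=
    ((((((((((hasDerivAt_const T₁ (-(g^2/15) * Real.log (-T₅))).sub
      ((((hasDerivAt_id T₁).const_mul ((1:ℝ)/5)).mul_const (T₂^2)).div_const T₅)).add_const
      ((4/75)*T₂^3*T₄/T₅^2)).sub
      (((hasDerivAt_pow 2 T₁).const_mul ((2:ℝ)/25*T₄^2)).div_const (T₅^2))).add
      ((((hasDerivAt_id T₁).const_mul ((16:ℝ)/125*T₄^3)).mul_const T₂).div_const (T₅^3))).sub_const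
      ((32/625)*T₄^4*T₂^2/T₅^4)).sub
      (((hasDerivAt_id T₁).const_mul ((128:ℝ)/9375*T₄^6)).div_const (T₅^5))).add_const
      ((512/46875)*T₄^7*T₂/T₅^6)).sub_const
      ((4096/5859375)*T₄^10/T₅^8)).add hw1)
  -- derivative in T₂
  have hz2 := ((HasDerivAt.const_sub (125*T₁*T₅^3)
      ((((hasDerivAt_id T₂).const_mul (100:ℝ)).mul_const T₄).mul_const (T₅^2))).add_const
      (16*T₄^4)).mul_const ((-T₅) ^ (-(16:ℝ)/5))
  have hw2 := (hWt (zeta32 T₁ T₂ T₄ T₅)).hasDerivAt.comp T₂ hz2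
  have H2 : HasDerivAt (fun t => gkm32F g Wt T₁ t T₄ T₅) _ T₂ :=
    ((((((((((hasDerivAt_const T₂ (-(g^2/15) * Real.log (-T₅))).sub
      ((((hasDerivAt_const T₂ ((1:ℝ)/5)).mul_const T₁).mul (hasDerivAt_pow 2 T₂)).div_const T₅)).add
      ((((hasDerivAt_pow 3 T₂).const_mul ((4:ℝ)/75)).mul_const T₄).div_const (T₅^2))).sub_const
      ((2/25)*T₄^2*T₁^2/T₅^2)).add
      ((((hasDerivAt_id T₂).const_mul ((16:ℝ)/125*T₄^3*T₁)).div_const (T₅^3)))).sub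
      (((hasDerivAt_pow 2 T₂).const_mul ((32:ℝ)/625*T₄^4)).div_const (T₅^4))).sub_const
      ((128/9375)*T₄^6*T₁/T₅^5)).add
      (((hasDerivAt_id T₂).const_mul ((512:ℝ)/46875*T₄^7)).div_const (T₅^6))).sub_const
      ((4096/5859375)*T₄^10/T₅^8)).add hw2)
  -- derivative in T₄
  have hz4 := ((HasDerivAt.const_sub (125*T₁*T₅^3)
      (((hasDerivAt_id T₄).const_mul (100*T₂)).mul_const (T₅^2))).add
      ((hasDerivAt_pow 4 T₄).const_mul (16:ℝ))).mul_const ((-T₅) ^ (-(16:ℝ)/5))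
  have hw4 := (hWt (zeta32 T₁ T₂ T₄ T₅)).hasDerivAt.comp T₄ hz4
  have H4 : HasDerivAt (fun t => gkm32F g Wt T₁ T₂ t T₅) _ T₄ :=
    ((((((((((hasDerivAt_const T₄ (-(g^2/15) * Real.log (-T₅))).sub_const
      ((1/5)*T₁*T₂^2/T₅)).add
      (((hasDerivAt_id T₄).const_mul ((4:ℝ)/75*T₂^3)).div_const (T₅^2))).sub
      ((((hasDerivAt_pow 2 T₄).const_mul ((2:ℝ)/25)).mul_const (T₁^2)).div_const (T₅^2))).add
      (((((hasDerivAt_pow 3 T₄).const_mul ((16:ℝ)/125)).mul_const T₁).mul_const T₂).div_const (T₅^3))).sub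
      ((((hasDerivAt_pow 4 T₄).const_mul ((32:ℝ)/625)).mul_const (T₂^2)).div_const (T₅^4))).sub
      ((((hasDerivAt_pow 6 T₄).const_mul ((128:ℝ)/9375)).mul_const T₁).div_const (T₅^5))).add
      ((((hasDerivAt_pow 7 T₄).const_mul ((512:ℝ)/46875)).mul_const T₂).div_const (T₅^6))).sub
      (((hasDerivAt_pow 10 T₄).const_mul ((4096:ℝ)/5859375)).div_const (T₅^8))).add hw4)
  -- derivative in T₅
  have hz5 := ((((hasDerivAt_pow 3 T₅).const_mul ((125:ℝ)*T₁)).sub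
      ((hasDerivAt_pow 2 T₅).const_mul (100*T₂*T₄))).add_const (16*T₄^4)).mul
      ((Real.hasDerivAt_rpow_const (x := -T₅) (p := -(16:ℝ)/5)
        (Or.inl hne)).comp T₅ (hasDerivAt_id T₅).neg)
  have hw5 := (hWt (zeta32 T₁ T₂ T₄ T₅)).hasDerivAt.comp T₅ hz5
  have H5 : HasDerivAt (fun t => gkm32F g Wt T₁ T₂ T₄ t) _ T₅ :=
    ((((((((((((Real.hasDerivAt_log hne).comp T₅ (hasDerivAt_id T₅).neg).const_mul
      (-(g^2/15))).sub
      ((hasDerivAt_const T₅ ((1:ℝ)/5*T₁*T₂^2)).div (hasDerivAt_id T₅) h5)).add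
      ((hasDerivAt_const T₅ ((4:ℝ)/75*T₂^3*T₄)).div (hasDerivAt_pow 2 T₅) (pow_ne_zero 2 h5))).sub
      ((hasDerivAt_const T₅ ((2:ℝ)/25*T₄^2*T₁^2)).div (hasDerivAt_pow 2 T₅) (pow_ne_zero 2 h5))).add
      ((hasDerivAt_const T₅ ((16:ℝ)/125*T₄^3*T₁*T₂)).div (hasDerivAt_pow 3 T₅) (pow_ne_zero 3 h5))).sub
      ((hasDerivAt_const T₅ ((32:ℝ)/625*T₄^4*T₂^2)).div (hasDerivAt_pow 4 T₅) (pow_ne_zero 4 h5))).sub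
      ((hasDerivAt_const T₅ ((128:ℝ)/9375*T₄^6*T₁)).div (hasDerivAt_pow 5 T₅) (pow_ne_zero 5 h5))).add
      ((hasDerivAt_const T₅ ((512:ℝ)/46875*T₄^7*T₂)).div (hasDerivAt_pow 6 T₅) (pow_ne_zero 6 h5))).sub
      ((hasDerivAt_const T₅ ((4096:ℝ)/5859375*T₄^10)).div (hasDerivAt_pow 8 T₅) (pow_ne_zero 8 h5))).add hw5)
  have hcd : (-T₅) ^ (-(16:ℝ)/5 - 1) * (-T₅) = (-T₅) ^ (-(16:ℝ)/5) := by
    rw [← Real.rpow_add_one hne]; norm_num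
  refine ⟨?_, ?_, ?_⟩
  · rw [H1.deriv, H2.deriv, H4.deriv]
    field_simp
    ring
  · rw [H1.deriv, H2.deriv]
    field_simp
    ring
  · have hX : (-T₅) ^ (-(16:ℝ)/5) = (-T₅) ^ (-(21:ℝ)/5) * (-T₅) := by
      rw [← Real.rpow_add_one hne]; norm_num
    rw [H1.deriv, H2.deriv, H4.deriv, H5.deriv]
    simp only [Function.comp_apply, Function.comp, id, Pi.sub_apply]
    rw [show (-(16:ℝ)/5 - 1) = -(21:ℝ)/5 from by norm_num, hX]
    field_simp
    ring
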